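/- Let (S,+) be a commutative semigroup and let C be a central subset of S. Then there exist functions α : P_f(S^ℕ) → S and H : P_f(S^ℕ) → P_f(ℕ) such that: (1) if F, G ∈ P_f(S^ℕ) and F ⊊ G, then max H(F) < min H(G); and (2) if m ∈ ℕ, G_1 ⊊ G_2 ⊊ … ⊊ G_m are members of P_f(S^ℕ), and for each i ∈ {1,…,m}, ⟨y_{i,n}⟩_{n=1}^∞ ∈ G_i, then Σ_{i=1}^{m} (α(G_i) + Σ_{t∈H(G_i)} y_{i,t}) ∈ C. -/

import Mathlib

open scoped Classical

namespace TotalSG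

/-- the extension of `+` to `βS`: `A ∈ p+q ↔ {x : -x+A ∈ q} ∈ p`. -/
def uadd {S : Type} [Add S] (p q : Ultrafilter S) : Ultrafilter S :=
  p.bind fun x => q.map fun y => x + y

/-- a two-sided ideal of `(βS,+)`. -/
def IsIdeal {S : Type} [Add S] (I : Set (Ultrafilter S)) : Prop :=
  I.Nonempty ∧ (∀ p : Ultrafilter S, ∀ q ∈ I, uadd p q ∈ I) ∧
    (∀ q ∈ I, ∀ p : Ultrafilter S, uadd q p ∈ I)

/-- `K(βS)`, the smallest two-sided ideal of `βS` (= the intersection of all two-sided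
ideals). -/
def KSet (S : Type) [Add S] : Set (Ultrafilter S) := ⋂₀ {I | IsIdeal I}

/-- `C ⊆ S` is central: it belongs to some idempotent ultrafilter in `K(βS)`. -/
def IsCentral {S : Type} [Add S] (C : Set S) : Prop :=
  ∃ p : Ultrafilter S, uadd p p = p ∧ p ∈ KSet S ∧ C ∈ p

/-- addition on `Option S`, with `none` the formal empty sum. -/
def oadd {S : Type} [Add S] : Option S → Option S → Option S
  | none, y => y
  | some a, none => some a
  | some a, some b => some (a + b)

/-- sum of a list of (optional) terms; `none` iff there are no terms. -/
def osumO {S : Type} [Add S] (l : List (Option S)) : Option S := l.foldr oadd none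

/-- `Σ_{t ∈ H} f(t)` (in increasing order of indices); `none` iff `H = ∅`. -/
def osumF {S : Type} [Add S] (f : ℕ → S) (H : Finset ℕ) : Option S :=
  osumO ((H.sort (· ≤ ·)).map fun t => some (f t))

/-- `A ⊆ S` is a J-set: for every `F ∈ P_f(S^ℕ)` there are `a ∈ S` and `H ∈ P_f(ℕ)` with
`a + Σ_{t ∈ H} f(t) ∈ A` for every `f ∈ F`. -/
def IsJSet {S : Type} [Add S] (A : Set S) : Prop :=
  ∀ F : Finset (ℕ → S), F.Nonempty →
    ∃ (a : S) (H : Finset ℕ), H.Nonempty ∧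
      ∀ f ∈ F, ∃ x : S, osumF f H = some x ∧ a + x ∈ A

end TotalSG



namespace CSTAux
open TotalSG

variable {S : Type} [AddCommSemigroup S]

instance optAdd : Add (Option S) := ⟨oadd⟩
instance optZero : Zero (Option S) := ⟨none⟩
lemma oadd_eq_add (x y : Option S) : oadd x y = x + y := rfl
lemma some_add_some (a b : S) : (some a + some b : Option S) = some (a + b) := rfl
lemma add_none (y : Option S) : y + (0 : Option S) = y := by cases y <;> rfl
instance optMonoid : AddCommMonoid (Option S) where
  add_assoc a b c := by
    cases a <;> cases b <;> cases c <;>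
      simp only [← oadd_eq_add, oadd] <;> rw [add_assoc]
  zero_add a := rfl
  add_zero a := add_none a
  add_comm a b := by
    cases a <;> cases b <;> simp only [← oadd_eq_add, oadd] <;> rw [add_comm]
  nsmul := nsmulRec
lemma osumO_eq_sum (l : List (Option S)) : osumO l = l.sum := by
  induction l with
  | nil => rfl
  | cons x l ih => rw [List.sum_cons, ← ih]; rfl
lemma osumF_eq_sum (f : ℕ → S) (H : Finset ℕ) : osumF f H = ∑ t ∈ H, (some (f t) : Option S) := by
  rw [osumF, osumO_eq_sum, Finset.sum_eq_multiset_sum]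
  have : H.1 = ↑(H.sort (· ≤ ·)) := (Finset.sort_eq H _).symm
  rw [this, Multiset.map_coe, Multiset.sum_coe]
lemma exists_some_sum {α : Type} (H : Finset α) (hH : H.Nonempty) (g : α → S) :
    ∃ x : S, (∑ t ∈ H, (some (g t) : Option S)) = some x := by
  induction hH using Finset.Nonempty.cons_induction with
  | singleton a => exact ⟨g a, by simp⟩
  | cons a s ha hs ih =>
      obtain ⟨x, hx⟩ := ih
      exact ⟨g a + x, by rw [Finset.sum_cons, hx]; rfl⟩
lemma some_add (a : S) (o : Option S) : ∃ b : S, (some a + o : Option S) = some b := by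
  cases o with
  | none => exact ⟨a, rfl⟩
  | some c => exact ⟨a + c, rfl⟩
lemma osumF_some (f : ℕ → S) (H : Finset ℕ) (hH : H.Nonempty) :
    ∃ x : S, osumF f H = some x := by
  rw [osumF_eq_sum]; exact exists_some_sum H hH f

lemma not_isJSet_iff {A : Set S} : ¬ IsJSet A ↔
    ∃ F : Finset (ℕ → S), F.Nonempty ∧ ∀ (a : S) (H : Finset ℕ), H.Nonempty →
      ∃ f ∈ F, ∀ x : S, osumF f H = some x → a + x ∉ A := by
  rw [IsJSet]
  push_neg
  rfl

lemma encode_inj {n t₁ t₂ r₁ r₂ : ℕ} (hn : 0 < n) (h₁ : r₁ < n) (h₂ : r₂ < n)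
    (he : n * t₁ + r₁ = n * t₂ + r₂) : t₁ = t₂ ∧ r₁ = r₂ := by
  have d1 : (n * t₁ + r₁) / n = t₁ := by
    rw [Nat.mul_add_div hn, Nat.div_eq_of_lt h₁, Nat.add_zero]
  have d2 : (n * t₂ + r₂) / n = t₂ := by
    rw [Nat.mul_add_div hn, Nat.div_eq_of_lt h₂, Nat.add_zero]
  have ht : t₁ = t₂ := by rw [← d1, ← d2, he]
  subst ht
  exact ⟨rfl, by omega⟩

/-- Partition regularity of J-sets (two cells), via the Hales–Jewett theorem. -/
theorem isJSet_union {A B : Set S} (h : IsJSet (A ∪ B)) : IsJSet A ∨ IsJSet B := by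
  by_contra hcon
  push_neg at hcon
  obtain ⟨hA', hB'⟩ := hcon
  obtain ⟨F₁, hF₁, hA⟩ := not_isJSet_iff.1 hA'
  obtain ⟨F₂, hF₂, hB⟩ := not_isJSet_iff.1 hB'
  obtain ⟨f₁, hf₁⟩ := hF₁
  set Λ : Type := {f // f ∈ F₁ ∪ F₂} with hΛ
  have hΛne : Nonempty Λ := ⟨⟨f₁, Finset.mem_union_left _ hf₁⟩⟩
  obtain ⟨ι, ιfin, hHJ⟩ := Combinatorics.Line.exists_mono_in_high_dimension Λ Bool
  have hιne : Nonempty (ι → Λ) := ⟨fun _ => hΛne.some⟩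
  set n : ℕ := Fintype.card ι with hn
  set eqv : ι ≃ Fin n := Fintype.equivFin ι with heqv
  set s₀ : S := f₁ 0 with hs₀
  set pos : ℕ → ι → ℕ := fun t j => n * t + (eqv j).1 with hpos
  set q : (ι → Λ) → ℕ → S :=
    fun w t => (∑ j : ι, (some ((w j).1 (pos t j)) : Option S)).getD s₀ with hq
  obtain ⟨a, H, hH, hall⟩ := h (Finset.image q Finset.univ)
    (Finset.univ_nonempty.image q)
  -- every point of the grid has all coordinates summing to `some`
  have hιne' : Nonempty ι := by
    rcases isEmpty_or_nonempty ι with hι | hι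
    · -- no proper line exists if ι is empty; but we will derive ι nonempty later from the line;
      -- handle directly: a line needs an index
      obtain ⟨l, -⟩ := hHJ fun _ => true
      obtain ⟨i, -⟩ := l.proper
      exact ⟨i⟩
    · exact hι
  have hnpos : 0 < n := Fintype.card_pos
  have hinner : ∀ (w : ι → Λ) (t : ℕ),
      (∑ j : ι, (some ((w j).1 (pos t j)) : Option S)) = some (q w t) := by
    intro w t
    obtain ⟨x, hx⟩ := exists_some_sum Finset.univ Finset.univ_nonempty
      (fun j => (w j).1 (pos t j))
    rw [hx]
    simp only [hq, hx, Option.getD_some]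
  have hval : ∀ g : ℕ → S, ∃ y : S, osumF g H = some y :=
    fun g => osumF_some g H hH
  set val : (ℕ → S) → S := fun g => (osumF g H).getD s₀ with hvaldef
  have hvs : ∀ g : ℕ → S, osumF g H = some (val g) := by
    intro g
    obtain ⟨y, hy⟩ := hval g
    rw [hy]; simp [hvaldef, hy]
  set Color : (ι → Λ) → Bool := fun w => if a + val (q w) ∈ A then true else false
    with hColor
  obtain ⟨l, c, hlc⟩ := hHJ Color
  set M : Finset ι := Finset.univ.filter (fun j => l.idxFun j = none) with hM
  obtain ⟨i₀, hi₀⟩ := l.proper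
  have hMne : M.Nonempty := ⟨i₀, by simp [hM, hi₀]⟩
  set H' : Finset ℕ := H.biUnion (fun t => M.image (fun j => pos t j)) with hH'
  have hH'ne : H'.Nonempty := by
    obtain ⟨t, ht⟩ := hH
    obtain ⟨j, hj⟩ := hMne
    exact ⟨pos t j, Finset.mem_biUnion.2 ⟨t, ht, Finset.mem_image_of_mem _ hj⟩⟩
  have hposlt : ∀ (t : ℕ) (j : ι), pos t j = n * t + (eqv j).1 ∧ (eqv j).1 < n :=
    fun t j => ⟨rfl, (eqv j).2⟩
  -- the fixed part
  set A' : Option S := ∑ t ∈ H, ∑ j ∈ Finset.univ.filter (fun j => ¬ l.idxFun j = none),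
      (some (((l.idxFun j).getD hΛne.some).1 (pos t j)) : Option S) with hA'def
  obtain ⟨a', ha'⟩ := some_add a A'
  -- the key decomposition
  have hdecomp : ∀ x : Λ, (some a : Option S) + osumF (q (l x)) H
      = some a' + osumF x.1 H' := by
    intro x
    have h1 : osumF (q (l x)) H
        = ∑ t ∈ H, ∑ j : ι, (some ((l x j).1 (pos t j)) : Option S) := by
      rw [osumF_eq_sum]
      exact Finset.sum_congr rfl fun t _ => (hinner (l x) t).symm
    have h2 : ∀ t : ℕ, (∑ j : ι, (some ((l x j).1 (pos t j)) : Option S))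
        = (∑ j ∈ M, (some (x.1 (pos t j)) : Option S))
          + ∑ j ∈ Finset.univ.filter (fun j => ¬ l.idxFun j = none),
              (some (((l.idxFun j).getD hΛne.some).1 (pos t j)) : Option S) := by
      intro t
      rw [← Finset.sum_filter_add_sum_filter_not Finset.univ (fun j => l.idxFun j = none)]
      congr 1
      · refine Finset.sum_congr rfl fun j hj => ?_
        have hjn : l.idxFun j = none := (Finset.mem_filter.1 hj).2
        have : l x j = x := by rw [Combinatorics.Line.coe_apply, hjn]; rfl
        rw [this]
      · refine Finset.sum_congr rfl fun j hj => ?_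
        have hjn : ¬ l.idxFun j = none := (Finset.mem_filter.1 hj).2
        have : l x j = ((l.idxFun j).getD hΛne.some) := by
          rw [Combinatorics.Line.coe_apply]
          cases hc : l.idxFun j with
          | none => exact absurd hc hjn
          | some u => rfl
        rw [this]
    have h3 : (∑ t ∈ H, ∑ j ∈ M, (some (x.1 (pos t j)) : Option S)) = osumF x.1 H' := by
      rw [osumF_eq_sum, hH']
      rw [Finset.sum_biUnion]
      · refine Finset.sum_congr rfl fun t _ => ?_
        rw [Finset.sum_image]
        intro j₁ _ j₂ _ hj
        have h1 := (eqv j₁).2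
        have h2 := (eqv j₂).2
        have hj' : n * t + ((eqv j₁) : ℕ) = n * t + ((eqv j₂) : ℕ) := hj
        exact eqv.injective (Fin.ext (encode_inj hnpos (eqv j₁).2 (eqv j₂).2 hj').2)
      · intro t₁ ht₁ t₂ ht₂ hne
        simp only [Finset.disjoint_left]
        intro z hz₁ hz₂
        obtain ⟨j₁, -, rfl⟩ := Finset.mem_image.1 hz₁
        obtain ⟨j₂, -, h12⟩ := Finset.mem_image.1 hz₂
        have e1 := (eqv j₁).2
        have e2 := (eqv j₂).2
        have h12' : n * t₂ + ((eqv j₂) : ℕ) = n * t₁ + ((eqv j₁) : ℕ) := h12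
        exact hne (encode_inj hnpos (eqv j₂).2 (eqv j₁).2 h12').1.symm
    calc (some a : Option S) + osumF (q (l x)) H
        = some a + (osumF x.1 H' + A') := by
          rw [h1]
          congr 1
          rw [← h3, hA'def, ← Finset.sum_add_distrib]
          exact Finset.sum_congr rfl fun t _ => h2 t
      _ = (some a + A') + osumF x.1 H' := by
          rw [add_assoc, add_comm (osumF x.1 H') A', ← add_assoc]
      _ = some a' + osumF x.1 H' := by rw [ha']
  -- relate the two sides concretely
  have hkey : ∀ x : Λ, ∃ v : S, osumF x.1 H' = some v ∧
      a + val (q (l x)) = a' + v ∧ a + val (q (l x)) ∈ A ∪ B := by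
    intro x
    obtain ⟨v, hv⟩ := osumF_some x.1 H' hH'ne
    obtain ⟨y, hy, hyAB⟩ := hall (q (l x))
      (Finset.mem_image_of_mem q (Finset.mem_univ (l x)))
    have hyval : val (q (l x)) = y := by
      have := hvs (q (l x)); rw [hy] at this; exact (Option.some_injective _ this).symm
    have hdx := hdecomp x
    rw [hvs (q (l x)), hv, some_add_some, some_add_some] at hdx
    refine ⟨v, hv, Option.some_injective _ hdx, ?_⟩
    rw [hyval]
    exact hyAB
  -- now split on the color
  cases c with
  | true =>
      obtain ⟨f, hf, hfbad⟩ := hA a' H' hH'ne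
      set x : Λ := ⟨f, Finset.mem_union_left _ hf⟩ with hx
      obtain ⟨v, hv, heq, -⟩ := hkey x
      have hcol := hlc x
      simp only [hColor] at hcol
      by_cases hmem : a + val (q (l x)) ∈ A
      · rw [heq] at hmem
        exact hfbad v hv hmem
      · rw [if_neg hmem] at hcol; exact Bool.noConfusion hcol
  | false =>
      obtain ⟨f, hf, hfbad⟩ := hB a' H' hH'ne
      set x : Λ := ⟨f, Finset.mem_union_right _ hf⟩ with hx
      obtain ⟨v, hv, heq, hAB⟩ := hkey x
      have hcol := hlc x
      simp only [hColor] at hcol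
      by_cases hmem : a + val (q (l x)) ∈ A
      · rw [if_pos hmem] at hcol; exact Bool.noConfusion hcol
      · have hBmem : a + val (q (l x)) ∈ B := hAB.resolve_left hmem
        rw [heq] at hBmem
        exact hfbad v hv hBmem


lemma isJSet_univ : IsJSet (Set.univ : Set S) := by
  intro F hF
  obtain ⟨f₀, hf₀⟩ := hF
  refine ⟨f₀ 0, {0}, Finset.singleton_nonempty 0, fun f hf => ?_⟩
  obtain ⟨x, hx⟩ := osumF_some f {0} (Finset.singleton_nonempty 0)
  exact ⟨x, hx, trivial⟩

lemma not_isJSet_empty [Nonempty S] : ¬ IsJSet (∅ : Set S) := by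
  intro h
  obtain ⟨s⟩ := ‹Nonempty S›
  obtain ⟨a, H, hH, hall⟩ := h {fun _ => s} (Finset.singleton_nonempty _)
  obtain ⟨x, -, hx⟩ := hall _ (Finset.mem_singleton_self _)
  exact hx

lemma isJSet_beyond {A : Set S} (hA : IsJSet A) (F : Finset (ℕ → S)) (hF : F.Nonempty) (k : ℕ) :
    ∃ (a : S) (H : Finset ℕ), H.Nonempty ∧ (∀ t ∈ H, k < t) ∧
      ∀ f ∈ F, ∃ x : S, osumF f H = some x ∧ a + x ∈ A := by
  set sh : (ℕ → S) → (ℕ → S) := fun f t => f (t + (k + 1)) with hsh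
  obtain ⟨a, H, hH, hall⟩ := hA (F.image sh) (hF.image sh)
  refine ⟨a, H.image (fun t => t + (k + 1)), hH.image _, ?_, ?_⟩
  · intro t ht
    obtain ⟨u, -, rfl⟩ := Finset.mem_image.1 ht
    omega
  · intro f hf
    obtain ⟨x, hx, hxA⟩ := hall (sh f) (Finset.mem_image_of_mem sh hf)
    refine ⟨x, ?_, hxA⟩
    rw [osumF_eq_sum] at hx ⊢
    rw [Finset.sum_image (by intro a _ b _ h; simp only at h; omega)]
    exact hx

lemma mem_uadd {A : Set S} {p q : Ultrafilter S} :
    A ∈ uadd p q ↔ {x | {y | x + y ∈ A} ∈ q} ∈ p := by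
  show A ∈ ((p.bind fun x => q.map fun y => x + y) : Ultrafilter S) ↔ _
  rw [← Ultrafilter.mem_coe]
  have : ((p.bind fun x => q.map fun y => x + y) : Filter S)
      = Filter.bind ↑p fun x => ↑(q.map fun y => x + y) := rfl
  rw [this, Filter.mem_bind']
  simp only [Ultrafilter.mem_coe, Ultrafilter.mem_map, Set.preimage, Set.mem_setOf_eq]

lemma isJSet_mono {A B : Set S} (hAB : A ⊆ B) (h : IsJSet A) : IsJSet B := by
  intro F hF
  obtain ⟨a, H, hH, hall⟩ := h F hF
  exact ⟨a, H, hH, fun f hf => by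
    obtain ⟨x, hx, hxa⟩ := hall f hf; exact ⟨x, hx, hAB hxa⟩⟩

lemma isJSet_of_finset_union [Nonempty S] (T : Finset (Set S))
    (h : IsJSet (⋃ A ∈ T, A)) : ∃ A ∈ T, IsJSet A := by
  induction T using Finset.induction_on with
  | empty => simp only [Finset.notMem_empty, Set.iUnion_of_empty, Set.iUnion_empty] at h
             exact absurd h not_isJSet_empty
  | @insert A T hAT ih =>
      rw [Finset.set_biUnion_insert] at h
      rcases isJSet_union h with h1 | h2
      · exact ⟨A, Finset.mem_insert_self _ _, h1⟩
      · obtain ⟨B, hB, hBJ⟩ := ih h2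
        exact ⟨B, Finset.mem_insert_of_mem hB, hBJ⟩

lemma exists_jset_ultrafilter [Nonempty S] :
    ∃ q : Ultrafilter S, ∀ A ∈ q, IsJSet A := by
  set g : Set (Set S) := {T | ∃ A : Set S, ¬ IsJSet A ∧ T = Aᶜ} with hg
  have hne : (Filter.generate g).NeBot := by
    rw [Filter.generate_neBot_iff]
    intro t hts htfin
    by_contra hemp
    rw [Set.not_nonempty_iff_eq_empty] at hemp
    set T : Finset (Set S) := htfin.toFinset.image compl with hT
    have hU : (⋃ A ∈ T, A) = Set.univ := by
      rw [hT]
      apply Set.eq_univ_of_forall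
      intro x
      have hx : x ∉ ⋂₀ t := by rw [hemp]; exact Set.notMem_empty x
      rw [Set.mem_sInter] at hx
      push_neg at hx
      obtain ⟨s, hs, hxs⟩ := hx
      refine Set.mem_biUnion (Finset.mem_image_of_mem compl (htfin.mem_toFinset.2 hs)) hxs
    have hJ : IsJSet (⋃ A ∈ T, A) := by rw [hU]; exact isJSet_univ
    obtain ⟨A, hAT, hAJ⟩ := isJSet_of_finset_union T hJ
    rw [hT] at hAT
    obtain ⟨s, hs, rfl⟩ := Finset.mem_image.1 hAT
    obtain ⟨B, hBJ, rfl⟩ := hts (htfin.mem_toFinset.1 hs)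
    rw [compl_compl] at hAJ
    exact hBJ hAJ
  obtain ⟨q, hq⟩ := Ultrafilter.exists_le (Filter.generate g)
  refine ⟨q, fun A hA => ?_⟩
  by_contra hAJ
  have : Aᶜ ∈ Filter.generate g := Filter.GenerateSets.basic ⟨A, hAJ, rfl⟩
  have hAc : Aᶜ ∈ q := hq this
  exact (Ultrafilter.compl_notMem_iff.2 hA) hAc

lemma eset_isIdeal [Nonempty S] :
    IsIdeal {q : Ultrafilter S | ∀ A ∈ q, IsJSet A} := by
  refine ⟨exists_jset_ultrafilter, ?_, ?_⟩
  · -- left absorption: p + q with q in E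
    intro p q hq A hA
    rw [mem_uadd] at hA
    obtain ⟨x, hx⟩ := Ultrafilter.nonempty_of_mem hA
    have hBJ : IsJSet {y | x + y ∈ A} := hq _ hx
    intro F hF
    obtain ⟨a, H, hH, hall⟩ := hBJ F hF
    refine ⟨x + a, H, hH, fun f hf => ?_⟩
    obtain ⟨z, hz, hza⟩ := hall f hf
    exact ⟨z, hz, by rw [add_assoc]; exact hza⟩
  · -- right absorption: q + p with q in E
    intro q hq p A hA
    rw [mem_uadd] at hA
    have hBJ : IsJSet {x | {y | x + y ∈ A} ∈ p} := hq _ hA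
    intro F hF
    obtain ⟨a, H, hH, hall⟩ := hBJ F hF
    set D : Set S := ⋂ f ∈ F, {y | ∀ x : S, osumF f H = some x → (a + x) + y ∈ A}
      with hD
    have hDp : D ∈ p := by
      rw [hD, ← Ultrafilter.mem_coe, Filter.biInter_finset_mem]
      intro f hf
      obtain ⟨x, hx, hxB⟩ := hall f hf
      have hsub : {y | (a + x) + y ∈ A} ⊆
          {y | ∀ x' : S, osumF f H = some x' → (a + x') + y ∈ A} := by
        intro y hy x' hx'
        rw [hx] at hx'
        rw [← Option.some_injective _ hx']
        exact hy
      exact Filter.mem_of_superset hxB hsub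
    obtain ⟨y, hy⟩ := Ultrafilter.nonempty_of_mem hDp
    refine ⟨a + y, H, hH, fun f hf => ?_⟩
    obtain ⟨x, hx, -⟩ := hall f hf
    refine ⟨x, hx, ?_⟩
    rw [hD, Set.mem_iInter₂] at hy
    have := hy f hf x hx
    rwa [add_right_comm] at this

lemma KSet_jset [Nonempty S] {p : Ultrafilter S} (hp : p ∈ KSet S) :
    ∀ A ∈ p, IsJSet A :=
  hp _ eset_isIdeal

-- star sets
def starSet (p : Ultrafilter S) (C : Set S) : Set S :=
  {x | x ∈ C ∧ {y | x + y ∈ C} ∈ p}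

lemma starSet_subset (p : Ultrafilter S) (C : Set S) : starSet p C ⊆ C :=
  fun _ hx => hx.1

lemma starSet_mem {p : Ultrafilter S} {C : Set S} (hp : uadd p p = p) (hC : C ∈ p) :
    starSet p C ∈ p := by
  have h1 : {x | {y | x + y ∈ C} ∈ p} ∈ p := mem_uadd.1 (by rw [hp]; exact hC)
  have : starSet p C = C ∩ {x | {y | x + y ∈ C} ∈ p} := rfl
  rw [this, ← Ultrafilter.mem_coe]
  exact Filter.inter_mem hC h1

lemma starSet_absorb {p : Ultrafilter S} {C : Set S} (hp : uadd p p = p)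
    {x : S} (hx : x ∈ starSet p C) : {y | x + y ∈ starSet p C} ∈ p := by
  have h1 : {y | x + y ∈ C} ∈ p := hx.2
  have h2 : {y | {z | y + z ∈ {u | x + u ∈ C}} ∈ p} ∈ p :=
    mem_uadd.1 (by rw [hp]; exact hx.2)
  have hset : {y | x + y ∈ starSet p C}
      = {y | x + y ∈ C} ∩ {y | {z | y + z ∈ {u | x + u ∈ C}} ∈ p} := by
    ext y
    simp only [starSet, Set.mem_setOf_eq, Set.mem_inter_iff, add_assoc]
  rw [hset, ← Ultrafilter.mem_coe]
  exact Filter.inter_mem h1 h2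

structure Ctx (S : Type) [AddCommSemigroup S] where
  p : Ultrafilter S
  Cs : Set S
  s₀ : S
  hJ : ∀ A ∈ p, IsJSet A
  hCs : Cs ∈ p
  hst : ∀ x ∈ Cs, {y | x + y ∈ Cs} ∈ p

variable (c : Ctx S)

lemma step_exists (U : Finset S) (F : Finset (ℕ → S)) (hF : F.Nonempty) (k : ℕ) :
    ∃ (a : S) (H : Finset ℕ), H.Nonempty ∧ (∀ t ∈ H, k < t) ∧
      ∀ f ∈ F, ∃ x : S, osumF f H = some x ∧
        (a + x ∈ c.Cs ∧ ∀ d ∈ U, d ∈ c.Cs → d + (a + x) ∈ c.Cs) := by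
  set D : Set S := c.Cs ∩ ⋂ d ∈ U.filter (· ∈ c.Cs), {y | d + y ∈ c.Cs} with hD
  have hDp : D ∈ c.p := by
    rw [hD, ← Ultrafilter.mem_coe]
    refine Filter.inter_mem c.hCs ((Filter.biInter_finset_mem _).2 fun d hd => ?_)
    exact c.hst d (Finset.mem_filter.1 hd).2
  obtain ⟨a, H, hH, hk, hall⟩ := isJSet_beyond (c.hJ D hDp) F hF k
  refine ⟨a, H, hH, hk, fun f hf => ?_⟩
  obtain ⟨x, hx, hxD⟩ := hall f hf
  rw [hD] at hxD
  refine ⟨x, hx, hxD.1, fun d hd hdC => ?_⟩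
  exact Set.mem_iInter₂.1 hxD.2 d (Finset.mem_filter.2 ⟨hd, hdC⟩)

noncomputable def corePair (F : Finset (ℕ → S)) (hF : F.Nonempty) (U : Finset S) (k : ℕ) :
    S × Finset ℕ :=
  ⟨(step_exists c U F hF k).choose, (step_exists c U F hF k).choose_spec.choose⟩

lemma corePair_spec (F : Finset (ℕ → S)) (hF : F.Nonempty) (U : Finset S) (k : ℕ) :
    (corePair c F hF U k).2.Nonempty ∧
    (∀ t ∈ (corePair c F hF U k).2, k < t) ∧
    ∀ f ∈ F, ∃ x : S, osumF f (corePair c F hF U k).2 = some x ∧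
      ((corePair c F hF U k).1 + x ∈ c.Cs ∧
        ∀ d ∈ U, d ∈ c.Cs → d + ((corePair c F hF U k).1 + x) ∈ c.Cs) :=
  (step_exists c U F hF k).choose_spec.choose_spec

noncomputable def sigOf (F : Finset (ℕ → S)) (a : S) (H : Finset ℕ) (U : Finset S) :
    Finset S :=
  (F.image fun f => a + (osumF f H).getD a) ∪
    ((U ×ˢ F).image fun z => z.1 + (a + (osumF z.2 H).getD a))

noncomputable def PF (F : Finset (ℕ → S)) : Finset (Finset (ℕ → S)) :=
  (F.powerset.erase F).filter Finset.Nonempty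

noncomputable def Ufrom (prev : Finset (ℕ → S) → S × Finset ℕ × Finset S)
    (F : Finset (ℕ → S)) : Finset S :=
  (PF F).biUnion fun G => (prev G).2.2

noncomputable def kfrom (prev : Finset (ℕ → S) → S × Finset ℕ × Finset S)
    (F : Finset (ℕ → S)) : ℕ :=
  (PF F).sup fun G => (prev G).2.1.sup id

noncomputable def step (prev : Finset (ℕ → S) → S × Finset ℕ × Finset S)
    (F : Finset (ℕ → S)) : S × Finset ℕ × Finset S :=
  if hF : F.Nonempty then
    ((corePair c F hF (Ufrom prev F) (kfrom prev F)).1,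
     (corePair c F hF (Ufrom prev F) (kfrom prev F)).2,
     sigOf F (corePair c F hF (Ufrom prev F) (kfrom prev F)).1
       (corePair c F hF (Ufrom prev F) (kfrom prev F)).2
       ((Ufrom prev F).filter (· ∈ c.Cs)))
  else (c.s₀, ∅, ∅)

lemma mem_PF {F G : Finset (ℕ → S)} (h : G ∈ PF F) : G ⊂ F ∧ G.Nonempty := by
  rw [PF, Finset.mem_filter, Finset.mem_erase, Finset.mem_powerset] at h
  exact ⟨lt_of_le_of_ne h.1.2 h.1.1, h.2⟩

lemma mem_PF_of {F G : Finset (ℕ → S)} (h1 : G ⊂ F) (h2 : G.Nonempty) : G ∈ PF F := by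
  rw [PF, Finset.mem_filter, Finset.mem_erase, Finset.mem_powerset]
  exact ⟨⟨h1.ne, h1.subset⟩, h2⟩

lemma step_congr (prev₁ prev₂ : Finset (ℕ → S) → S × Finset ℕ × Finset S)
    (F : Finset (ℕ → S)) (h : ∀ G ∈ PF F, prev₁ G = prev₂ G) :
    step c prev₁ F = step c prev₂ F := by
  have hU : Ufrom prev₁ F = Ufrom prev₂ F :=
    Finset.biUnion_congr rfl fun G hG => by rw [h G hG]
  have hk : kfrom prev₁ F = kfrom prev₂ F :=
    Finset.sup_congr rfl fun G hG => by rw [h G hG]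
  rw [step, step, hU, hk]

noncomputable def buildAux : ℕ → Finset (ℕ → S) → S × Finset ℕ × Finset S
  | 0, _ => (c.s₀, ∅, ∅)
  | n+1, F => step c (buildAux n) F

lemma buildAux_stable : ∀ (k n m : ℕ) (F : Finset (ℕ → S)), F.card ≤ k →
    F.card < n → F.card < m → buildAux c n F = buildAux c m F := by
  intro k
  induction k with
  | zero =>
      intro n m F hc hn hm
      obtain ⟨n', rfl⟩ : ∃ n', n = n' + 1 := ⟨n - 1, by omega⟩
      obtain ⟨m', rfl⟩ : ∃ m', m = m' + 1 := ⟨m - 1, by omega⟩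
      have hF : ¬ F.Nonempty := by
        rw [Finset.nonempty_iff_ne_empty]
        simp only [ne_eq, not_not]
        exact Finset.card_eq_zero.1 (by omega)
      show step c _ F = step c _ F
      rw [step, step, dif_neg hF, dif_neg hF]
  | succ k ih =>
      intro n m F hc hn hm
      obtain ⟨n', rfl⟩ : ∃ n', n = n' + 1 := ⟨n - 1, by omega⟩
      obtain ⟨m', rfl⟩ : ∃ m', m = m' + 1 := ⟨m - 1, by omega⟩
      show step c _ F = step c _ F
      apply step_congr
      intro G hG
      have hGF : G.card < F.card := Finset.card_lt_card (mem_PF hG).1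
      have h1 : G.card ≤ k := by omega
      rw [ih n' (G.card + 1) G h1 (by omega) (by omega),
        ih m' (G.card + 1) G h1 (by omega) (by omega)]

noncomputable def build (F : Finset (ℕ → S)) : S × Finset ℕ × Finset S :=
  buildAux c (F.card + 1) F

lemma build_eq (F : Finset (ℕ → S)) : build c F = step c (build c) F := by
  show step c (buildAux c F.card) F = _
  apply step_congr
  intro G hG
  have hGF : G.card < F.card := Finset.card_lt_card (mem_PF hG).1
  exact buildAux_stable c F.card F.card (G.card + 1) G (by omega) (by omega) (by omega)

noncomputable def aF (F : Finset (ℕ → S)) : S := (build c F).1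
noncomputable def hF' (F : Finset (ℕ → S)) : Finset ℕ := (build c F).2.1
noncomputable def sF (F : Finset (ℕ → S)) : Finset S := (build c F).2.2

lemma build_spec (F : Finset (ℕ → S)) (hF : F.Nonempty) :
    (hF' c F).Nonempty ∧
    (∀ t ∈ hF' c F, kfrom (build c) F < t) ∧
    (∀ f ∈ F, ∃ x : S, osumF f (hF' c F) = some x ∧
      (aF c F + x ∈ c.Cs ∧
        ∀ d ∈ Ufrom (build c) F, d ∈ c.Cs → d + (aF c F + x) ∈ c.Cs)) ∧
    sF c F = sigOf F (aF c F) (hF' c F) ((Ufrom (build c) F).filter (· ∈ c.Cs)) := by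
  have hα : aF c F = (corePair c F hF (Ufrom (build c) F) (kfrom (build c) F)).1 := by
    rw [aF, build_eq, step, dif_pos hF]
  have hH : hF' c F = (corePair c F hF (Ufrom (build c) F) (kfrom (build c) F)).2 := by
    rw [hF', build_eq, step, dif_pos hF]
  have hSig : sF c F = sigOf F (corePair c F hF (Ufrom (build c) F) (kfrom (build c) F)).1
      (corePair c F hF (Ufrom (build c) F) (kfrom (build c) F)).2
      ((Ufrom (build c) F).filter (· ∈ c.Cs)) := by
    rw [sF, build_eq, step, dif_pos hF]
  obtain ⟨h1, h2, h3⟩ := corePair_spec c F hF (Ufrom (build c) F) (kfrom (build c) F)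
  rw [hα, hH, hSig]
  exact ⟨h1, h2, h3, rfl⟩

lemma sig_subset (F : Finset (ℕ → S)) (hF : F.Nonempty) :
    ∀ s ∈ sF c F, s ∈ c.Cs := by
  obtain ⟨-, -, h3, hSig⟩ := build_spec c F hF
  intro s hs
  rw [hSig, sigOf, Finset.mem_union] at hs
  rcases hs with hs | hs
  · obtain ⟨f, hf, rfl⟩ := Finset.mem_image.1 hs
    obtain ⟨x, hx, hxC, -⟩ := h3 f hf
    rw [hx]
    simpa using hxC
  · obtain ⟨z, hz, rfl⟩ := Finset.mem_image.1 hs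
    obtain ⟨hz1, hz2⟩ := Finset.mem_product.1 hz
    obtain ⟨x, hx, -, hd⟩ := h3 z.2 hz2
    rw [Finset.mem_filter] at hz1
    rw [hx]
    simpa using hd z.1 hz1.1 hz1.2

lemma mem_sig_single (F : Finset (ℕ → S)) (hF : F.Nonempty) (f : ℕ → S) (hf : f ∈ F) :
    ∃ x : S, osumF f (hF' c F) = some x ∧ aF c F + x ∈ sF c F := by
  obtain ⟨-, -, h3, hSig⟩ := build_spec c F hF
  obtain ⟨x, hx, -, -⟩ := h3 f hf
  refine ⟨x, hx, ?_⟩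
  rw [hSig, sigOf, Finset.mem_union]
  left
  refine Finset.mem_image.2 ⟨f, hf, ?_⟩
  rw [hx]
  simp

lemma mem_sig_step (F : Finset (ℕ → S)) (hF : F.Nonempty) (f : ℕ → S) (hf : f ∈ F)
    (G : Finset (ℕ → S)) (hG : G ∈ PF F) (d : S) (hd : d ∈ sF c G) :
    ∃ x : S, osumF f (hF' c F) = some x ∧ d + (aF c F + x) ∈ sF c F := by
  obtain ⟨-, -, h3, hSig⟩ := build_spec c F hF
  obtain ⟨x, hx, -, -⟩ := h3 f hf
  have hdU : d ∈ Ufrom (build c) F := Finset.mem_biUnion.2 ⟨G, hG, hd⟩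
  have hdC : d ∈ c.Cs := sig_subset c G (mem_PF hG).2 d hd
  refine ⟨x, hx, ?_⟩
  rw [hSig, sigOf, Finset.mem_union]
  right
  refine Finset.mem_image.2 ⟨(d, f), Finset.mem_product.2
    ⟨Finset.mem_filter.2 ⟨hdU, hdC⟩, hf⟩, ?_⟩
  rw [hx]
  simp

lemma hsep (F G : Finset (ℕ → S)) (hFne : F.Nonempty) (hFG : F ⊂ G) :
    ∀ x ∈ hF' c F, ∀ y ∈ hF' c G, x < y := by
  have hG : G.Nonempty := hFne.mono hFG.subset
  intro x hx y hy
  have h2 := (build_spec c G hG).2.1 y hy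
  have h1 : x ≤ kfrom (build c) G := by
    calc x ≤ (hF' c F).sup id := Finset.le_sup (f := id) hx
      _ ≤ _ := Finset.le_sup (f := fun G' => (build c G').2.1.sup id) (mem_PF_of hFG hFne)
  omega

lemma chain_sum : ∀ (m : ℕ) (G : Fin (m+1) → Finset (ℕ → S)),
    (∀ i, (G i).Nonempty) → (∀ i j : Fin (m+1), i < j → G i ⊂ G j) →
    ∀ f : Fin (m+1) → ℕ → S, (∀ i, f i ∈ G i) →
    ∃ cc : S, (∑ i : Fin (m+1),
        ((some (aF c (G i)) : Option S) + osumF (f i) (hF' c (G i)))) = some cc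
      ∧ cc ∈ sF c (G (Fin.last m)) := by
  intro m
  induction m with
  | zero =>
      intro G hne hch f hf
      obtain ⟨x, hx, hmem⟩ := mem_sig_single c (G 0) (hne 0) (f 0) (hf 0)
      rw [Fin.sum_univ_one, hx, some_add_some]
      exact ⟨_, rfl, hmem⟩
  | succ m ih =>
      intro G hne hch f hf
      obtain ⟨c', hc', hcmem⟩ := ih (fun i => G i.castSucc) (fun i => hne _)
        (fun i j hij => hch _ _ (by exact_mod_cast Fin.castSucc_lt_castSucc_iff.2 hij))
        (fun i => f i.castSucc) (fun i => hf _)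
      have hPF : G ((Fin.last m).castSucc) ∈ PF (G (Fin.last (m+1))) :=
        mem_PF_of (hch _ _ (Fin.castSucc_lt_last _)) (hne _)
      obtain ⟨x, hx, hmem⟩ := mem_sig_step c (G (Fin.last (m+1)))
        (hne _) (f (Fin.last (m+1))) (hf _) (G ((Fin.last m).castSucc)) hPF c' hcmem
      rw [Fin.sum_univ_castSucc, hc', hx, some_add_some, some_add_some]
      exact ⟨_, rfl, hmem⟩


end CSTAux

open TotalSG in
/-- The stronger Central Sets Theorem of De, Hindman and Strauss for commutative
semigroups. -/
theorem de_hindman_strauss_CST {S : Type} [AddCommSemigroup S]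
    (C : Set S) (hC : IsCentral C) :
    ∃ (α : Finset (ℕ → S) → S) (H : Finset (ℕ → S) → Finset ℕ),
      (∀ F : Finset (ℕ → S), F.Nonempty → (H F).Nonempty) ∧
      (∀ F G : Finset (ℕ → S), F.Nonempty → F ⊂ G → ∀ x ∈ H F, ∀ y ∈ H G, x < y) ∧
      ∀ m : ℕ, ∀ hm : 0 < m, ∀ G : Fin m → Finset (ℕ → S),
        (∀ i, (G i).Nonempty) → (∀ i j : Fin m, i < j → G i ⊂ G j) →
        ∀ f : Fin m → ℕ → S, (∀ i, f i ∈ G i) →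
        ∃ c ∈ C,
          osumO (List.ofFn fun i : Fin m =>
            oadd (some (α (G i))) (osumF (f i) (H (G i)))) = some c := by
  obtain ⟨p, hpid, hpK, hCp⟩ := hC
  have hSne : Nonempty S := by
    obtain ⟨x, -⟩ := Ultrafilter.nonempty_of_mem hCp
    exact ⟨x⟩
  haveI := hSne
  set Cs : Set S := CSTAux.starSet p C with hCsdef
  have hCs : Cs ∈ p := CSTAux.starSet_mem hpid hCp
  have hst : ∀ x ∈ Cs, {y | x + y ∈ Cs} ∈ p := fun x hx => CSTAux.starSet_absorb hpid hx
  have hJ : ∀ A ∈ p, IsJSet A := CSTAux.KSet_jset hpK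
  set c : CSTAux.Ctx S := ⟨p, Cs, Classical.arbitrary S, hJ, hCs, hst⟩ with hcdef
  refine ⟨CSTAux.aF c, CSTAux.hF' c, ?_, ?_, ?_⟩
  · exact fun F hFne => (CSTAux.build_spec c F hFne).1
  · exact fun F G hFne hFG => CSTAux.hsep c F G hFne hFG
  · intro m hm G hne hch f hf
    obtain ⟨m', rfl⟩ : ∃ m', m = m' + 1 := ⟨m - 1, by omega⟩
    obtain ⟨cc, hsum, hmem⟩ := CSTAux.chain_sum c m' G hne hch f hf
    refine ⟨cc, ?_, ?_⟩
    · exact CSTAux.starSet_subset p C (CSTAux.sig_subset c _ (hne _) cc hmem)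
    · rw [CSTAux.osumO_eq_sum, List.sum_ofFn]
      exact hsum
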